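/- Let d ≥ 2 and let X be a real random variable with E[X] = 0, E[X²] = 1 and E[X⁴] < ∞. Let X₁ and {X_j^{(i)} : 2 ≤ j ≤ d, i ≥ 1} all be independent random variables, each distributed as X. For n ≥ 2 set Q_n = X₁ · (X₂^{(1)}⋯X_d^{(1)} + ⋯ + X₂^{(n−1)}⋯X_d^{(n−1)})/√(n−1). Then E[Q_n²] = 1 and E[Q_n⁴] = E[X⁴]·(3 + (E[X⁴]^{d−1} − 3)/(n−1)); in particular, E[Q_n⁴] → 3·E[X⁴] as n → ∞. -/

import Mathlib

open MeasureTheory ProbabilityTheory Filter Topology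

noncomputable section

lemma aux_int_pow {Ω : Type*} [MeasurableSpace Ω] {μ : Measure Ω} [IsProbabilityMeasure μ]
    {X : Ω → ℝ} (hmeas : Measurable X) (hint : Integrable (fun ω => X ω ^ 4) μ)
    {k : ℕ} (hk : k ≤ 4) : Integrable (fun ω => X ω ^ k) μ := by
  refine ((integrable_const (1:ℝ)).add hint).mono'
    ((hmeas.pow_const k).aestronglyMeasurable) ?_
  filter_upwards with ω
  show ‖X ω ^ k‖ ≤ 1 + X ω ^ 4
  have h0 : (0:ℝ) ≤ X ω ^ 4 := by positivity
  have habs : ‖X ω ^ k‖ = |X ω| ^ k := by rw [Real.norm_eq_abs, abs_pow]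
  rw [habs]
  rcases le_total |X ω| 1 with h | h
  · have := pow_le_one₀ (n := k) (abs_nonneg (X ω)) h
    linarith
  · have h1 : |X ω| ^ k ≤ |X ω| ^ 4 := pow_le_pow_right₀ h hk
    have h2 : |X ω| ^ 4 = X ω ^ 4 := by
      rw [← abs_pow, abs_of_nonneg h0]
    linarith

lemma aux_map_pow {Ω : Type*} [MeasurableSpace Ω] {μ : Measure Ω}
    {X V : Ω → ℝ} (hmX : Measurable X) (hmV : Measurable V)
    (hlaw : μ.map V = μ.map X) (k : ℕ) :
    (∫ ω, V ω ^ k ∂μ) = (∫ ω, X ω ^ k ∂μ) ∧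
      (Integrable (fun ω => X ω ^ k) μ → Integrable (fun ω => V ω ^ k) μ) := by
  have hg : Measurable fun x : ℝ => x ^ k := measurable_id.pow_const k
  constructor
  · rw [← integral_map hmV.aemeasurable (hg.aestronglyMeasurable), hlaw,
      integral_map hmX.aemeasurable (hg.aestronglyMeasurable)]
  · intro h
    have : Integrable (fun x : ℝ => x ^ k) (μ.map X) := by
      rwa [integrable_map_measure hg.aestronglyMeasurable hmX.aemeasurable]
    rw [← hlaw] at this
    rwa [integrable_map_measure hg.aestronglyMeasurable hmV.aemeasurable] at this

lemma aux_prod_indep {ι Ω : Type*} [MeasurableSpace Ω] {μ : Measure Ω} [IsProbabilityMeasure μ]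
    {W : ι → Ω → ℝ} (hWmeas : ∀ p, Measurable (W p))
    (hWindep : iIndepFun W μ)
    (k : ι → ℕ) (hInt : ∀ p, Integrable (fun ω => W p ω ^ k p) μ) (T : Finset ι) :
    Integrable (fun ω => ∏ p ∈ T, W p ω ^ k p) μ ∧
      (∫ ω, ∏ p ∈ T, W p ω ^ k p ∂μ) = ∏ p ∈ T, ∫ ω, W p ω ^ k p ∂μ := by
  classical
  set f : ι → Ω → ℝ := fun p ω => W p ω ^ k p with hf
  have hfm : ∀ p, Measurable (f p) := fun p => (hWmeas p).pow_const (k p)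
  have hg : iIndepFun f μ :=
    hWindep.comp (fun p x => x ^ k p) (fun p => measurable_id.pow_const (k p))
  induction T using Finset.induction_on with
  | empty => simp
  | @insert a s ha ih =>
    have hind : IndepFun (∏ j ∈ s, f j) (f a) μ :=
      hg.indepFun_finsetProd_of_notMem hfm ha
    have hps : (∏ j ∈ s, f j) = fun ω => ∏ p ∈ s, W p ω ^ k p := by
      funext ω; rw [Finset.prod_apply]
    have hint_prod : Integrable (∏ j ∈ s, f j) μ := by rw [hps]; exact ih.1
    have hmul : Integrable ((∏ j ∈ s, f j) * f a) μ :=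
      hind.integrable_mul hint_prod (hInt a)
    have heq : ((∏ j ∈ s, f j) * f a) = fun ω => ∏ p ∈ insert a s, W p ω ^ k p := by
      funext ω
      simp only [Pi.mul_apply, hps, Finset.prod_insert ha, hf, Finset.prod_apply]
      ring
    constructor
    · rw [← heq]; exact hmul
    · rw [← heq]
      have := hind.integral_mul_eq_mul_integral hint_prod.aestronglyMeasurable (hInt a).aestronglyMeasurable
      rw [this, hps, ih.2, Finset.prod_insert ha]
      ring

lemma aux_block_indep {ι Ω : Type*} [MeasurableSpace Ω] {μ : Measure Ω}
    {W : ι → Ω → ℝ} (hWmeas : ∀ p, Measurable (W p))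
    (hWindep : iIndepFun W μ)
    (A B : Finset ι) (hAB : Disjoint A B)
    {F : (A → ℝ) → ℝ} {G : (B → ℝ) → ℝ} (hF : Measurable F) (hG : Measurable G) :
    IndepFun (fun ω => F fun i => W i ω) (fun ω => G fun i => W i ω) μ :=
  (hWindep.indepFun_finset A B hAB hWmeas).comp hF hG

def auxY (d : ℕ) {Ω : Type*} (W : Option (ℕ × Fin (d - 1)) → Ω → ℝ) (i : ℕ) (ω : Ω) : ℝ :=
  ∏ j : Fin (d - 1), W (some (i, j)) ω

def auxS (d : ℕ) {Ω : Type*} (W : Option (ℕ × Fin (d - 1)) → Ω → ℝ) (m : ℕ) (ω : Ω) : ℝ :=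
  ∑ i ∈ Finset.range m, auxY d W i ω

lemma auxY_moment {Ω : Type*} [MeasurableSpace Ω] {μ : Measure Ω} [IsProbabilityMeasure μ]
    (d : ℕ) {W : Option (ℕ × Fin (d - 1)) → Ω → ℝ} (hWmeas : ∀ p, Measurable (W p))
    (hWindep : iIndepFun W μ)
    (i k : ℕ) {c : ℝ} (hInt : ∀ p, Integrable (fun ω => W p ω ^ k) μ)
    (hval : ∀ p, (∫ ω, W p ω ^ k ∂μ) = c) :
    Integrable (fun ω => auxY d W i ω ^ k) μ ∧ (∫ ω, auxY d W i ω ^ k ∂μ) = c ^ (d - 1) := by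
  classical
  set T : Finset (Option (ℕ × Fin (d - 1))) :=
    Finset.univ.image (fun j : Fin (d - 1) => (some (i, j) : Option (ℕ × Fin (d - 1)))) with hT
  obtain ⟨h1, h2⟩ := aux_prod_indep hWmeas hWindep (fun _ => k) hInt T
  have hinj : Function.Injective
      (fun j : Fin (d - 1) => (some (i, j) : Option (ℕ × Fin (d - 1)))) := by
    intro a b h; simpa using h
  have hfe : (fun ω => ∏ p ∈ T, W p ω ^ k) = fun ω => auxY d W i ω ^ k := by
    funext ω
    rw [hT, Finset.prod_image (fun a _ b _ h => hinj h), auxY, ← Finset.prod_pow]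
  rw [hfe] at h1 h2
  refine ⟨h1, ?_⟩
  rw [h2, Finset.prod_congr rfl (fun p _ => hval p), Finset.prod_const, hT,
    Finset.card_image_of_injective _ hinj, Finset.card_univ, Fintype.card_fin]

lemma auxSY_indep {Ω : Type*} [MeasurableSpace Ω] {μ : Measure Ω}
    (d : ℕ) {W : Option (ℕ × Fin (d - 1)) → Ω → ℝ} (hWmeas : ∀ p, Measurable (W p))
    (hWindep : iIndepFun W μ) (m : ℕ) :
    IndepFun (auxS d W m) (auxY d W m) μ := by
  classical
  set A : Finset (Option (ℕ × Fin (d - 1))) :=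
    (Finset.range m ×ˢ (Finset.univ : Finset (Fin (d - 1)))).image
      (fun q => (some q : Option (ℕ × Fin (d - 1)))) with hA
  set B : Finset (Option (ℕ × Fin (d - 1))) :=
    Finset.univ.image (fun j : Fin (d - 1) => (some (m, j) : Option (ℕ × Fin (d - 1)))) with hB
  have hAB : Disjoint A B := by
    rw [Finset.disjoint_left]
    rintro p hp hq
    rw [hA, Finset.mem_image] at hp
    rw [hB, Finset.mem_image] at hq
    obtain ⟨⟨i, j⟩, hij, rfl⟩ := hp
    obtain ⟨j', -, h⟩ := hq
    rw [Finset.mem_product, Finset.mem_range] at hij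
    simp only [Option.some.injEq, Prod.mk.injEq] at h
    have hi := hij.1
    omega
  have hmemA : ∀ i ∈ Finset.range m, ∀ j : Fin (d - 1),
      (some (i, j) : Option (ℕ × Fin (d - 1))) ∈ A := by
    intro i hi j
    exact Finset.mem_image_of_mem _ (Finset.mem_product.2 ⟨hi, Finset.mem_univ j⟩)
  have hmemB : ∀ j : Fin (d - 1), (some (m, j) : Option (ℕ × Fin (d - 1))) ∈ B :=
    fun j => Finset.mem_image_of_mem _ (Finset.mem_univ j)
  set F : ({p // p ∈ A} → ℝ) → ℝ :=
    fun v => ∑ i ∈ (Finset.range m).attach,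
      ∏ j : Fin (d - 1), v ⟨some (i.1, j), hmemA i.1 i.2 j⟩ with hF
  set G : ({p // p ∈ B} → ℝ) → ℝ :=
    fun v => ∏ j ∈ (Finset.univ : Finset (Fin (d - 1))).attach,
      v ⟨some (m, j.1), hmemB j.1⟩ with hG
  have hFm : Measurable F :=
    Finset.measurable_sum _ fun i _ => Finset.measurable_prod _ fun j _ => measurable_pi_apply _
  have hGm : Measurable G := Finset.measurable_prod _ fun j _ => measurable_pi_apply _
  have h := aux_block_indep hWmeas hWindep A B hAB hFm hGm
  have hFeq : (fun ω => F fun i => W i ω) = auxS d W m := by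
    funext ω
    rw [hF]
    simp only
    rw [Finset.sum_attach (Finset.range m) (fun i => ∏ j : Fin (d - 1), W (some (i, j)) ω)]
    rfl
  have hGeq : (fun ω => G fun i => W i ω) = auxY d W m := by
    funext ω
    rw [hG]
    simp only
    rw [Finset.prod_attach (Finset.univ : Finset (Fin (d - 1)))
      (fun j => W (some (m, j)) ω)]
    rfl
  rwa [hFeq, hGeq] at h

lemma auxX1S_indep {Ω : Type*} [MeasurableSpace Ω] {μ : Measure Ω}
    (d : ℕ) {W : Option (ℕ × Fin (d - 1)) → Ω → ℝ} (hWmeas : ∀ p, Measurable (W p))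
    (hWindep : iIndepFun W μ) (m : ℕ) :
    IndepFun (W none) (auxS d W m) μ := by
  classical
  set A : Finset (Option (ℕ × Fin (d - 1))) := {none} with hA
  set B : Finset (Option (ℕ × Fin (d - 1))) :=
    (Finset.range m ×ˢ (Finset.univ : Finset (Fin (d - 1)))).image
      (fun q => (some q : Option (ℕ × Fin (d - 1)))) with hB
  have hAB : Disjoint A B := by
    rw [Finset.disjoint_left]
    rintro p hp hq
    rw [hA, Finset.mem_singleton] at hp
    rw [hB, Finset.mem_image] at hq
    obtain ⟨q, -, h⟩ := hq
    rw [hp] at h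
    exact Option.some_ne_none _ h
  have hmemB : ∀ i ∈ Finset.range m, ∀ j : Fin (d - 1),
      (some (i, j) : Option (ℕ × Fin (d - 1))) ∈ B := by
    intro i hi j
    exact Finset.mem_image_of_mem _ (Finset.mem_product.2 ⟨hi, Finset.mem_univ j⟩)
  set F : ({p // p ∈ A} → ℝ) → ℝ :=
    fun v => v ⟨none, by rw [hA]; exact Finset.mem_singleton_self _⟩ with hF
  set G : ({p // p ∈ B} → ℝ) → ℝ :=
    fun v => ∑ i ∈ (Finset.range m).attach,
      ∏ j : Fin (d - 1), v ⟨some (i.1, j), hmemB i.1 i.2 j⟩ with hG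
  have hFm : Measurable F := measurable_pi_apply _
  have hGm : Measurable G :=
    Finset.measurable_sum _ fun i _ => Finset.measurable_prod _ fun j _ => measurable_pi_apply _
  have h := aux_block_indep hWmeas hWindep A B hAB hFm hGm
  have hFeq : (fun ω => F fun i => W i ω) = W none := by funext ω; rw [hF]
  have hGeq : (fun ω => G fun i => W i ω) = auxS d W m := by
    funext ω
    rw [hG]
    simp only
    rw [Finset.sum_attach (Finset.range m) (fun i => ∏ j : Fin (d - 1), W (some (i, j)) ω)]
    rfl
  rwa [hFeq, hGeq] at h

lemma auxS_moment {Ω : Type*} [MeasurableSpace Ω] {μ : Measure Ω} [IsProbabilityMeasure μ]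
    (d : ℕ) (hd1 : d - 1 ≠ 0) {W : Option (ℕ × Fin (d - 1)) → Ω → ℝ}
    (hWmeas : ∀ p, Measurable (W p))
    (hWindep : iIndepFun W μ)
    (hI : ∀ p k, k ≤ 4 → Integrable (fun ω => W p ω ^ k) μ)
    (e : ℕ → ℝ) (he : ∀ p k, (∫ ω, W p ω ^ k ∂μ) = e k)
    (he1 : e 1 = 0) (he2 : e 2 = 1) :
    ∀ m : ℕ, (∀ k, k ≤ 4 → Integrable (fun ω => auxS d W m ω ^ k) μ) ∧
      (∫ ω, auxS d W m ω ∂μ) = 0 ∧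
      (∫ ω, auxS d W m ω ^ 2 ∂μ) = (m : ℝ) ∧
      (∫ ω, auxS d W m ω ^ 4 ∂μ) =
        (m : ℝ) * (e 4) ^ (d - 1) + 3 * (m : ℝ) * ((m : ℝ) - 1) := by
  intro m
  induction m with
  | zero =>
    have h0 : ∀ ω : Ω, auxS d W 0 ω = 0 := by intro ω; simp [auxS]
    refine ⟨?_, ?_, ?_, ?_⟩
    · intro k hk
      have : (fun ω => auxS d W 0 ω ^ k) = fun _ => (0 : ℝ) ^ k := by
        funext ω; rw [h0]
      rw [this]; exact integrable_const _
    · simp only [h0]; simp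
    · simp only [h0]; simp
    · simp only [h0]; simp
  | succ m ih =>
    have hsucc : ∀ ω, auxS d W (m + 1) ω = auxS d W m ω + auxY d W m ω := by
      intro ω; simp [auxS, Finset.sum_range_succ]
    have hind : IndepFun (auxS d W m) (auxY d W m) μ := auxSY_indep d hWmeas hWindep m
    have hZint : ∀ k, k ≤ 4 → Integrable (fun ω => auxY d W m ω ^ k) μ := fun k hk =>
      (auxY_moment d hWmeas hWindep m k (fun p => hI p k hk) (fun p => he p k)).1
    have hZval : ∀ k, k ≤ 4 → (∫ ω, auxY d W m ω ^ k ∂μ) = e k ^ (d - 1) := fun k hk =>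
      (auxY_moment d hWmeas hWindep m k (fun p => hI p k hk) (fun p => he p k)).2
    have hcross : ∀ a b : ℕ, a ≤ 4 → b ≤ 4 →
        Integrable (fun ω => auxS d W m ω ^ a * auxY d W m ω ^ b) μ ∧
        (∫ ω, auxS d W m ω ^ a * auxY d W m ω ^ b ∂μ) =
          (∫ ω, auxS d W m ω ^ a ∂μ) * (∫ ω, auxY d W m ω ^ b ∂μ) := by
      intro a b ha hb
      have hiab : IndepFun (fun ω => auxS d W m ω ^ a) (fun ω => auxY d W m ω ^ b) μ :=
        hind.comp (measurable_id.pow_const a) (measurable_id.pow_const b)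
      exact ⟨hiab.integrable_mul (ih.1 a ha) (hZint b hb),
        hiab.integral_mul_eq_mul_integral (ih.1 a ha).aestronglyMeasurable (hZint b hb).aestronglyMeasurable⟩
    have hS0 : (∫ ω, auxS d W m ω ^ 0 ∂μ) = 1 := by simp
    have hZ0 : (∫ ω, auxY d W m ω ^ 0 ∂μ) = 1 := by simp
    have hSp1 : (∫ ω, auxS d W m ω ^ 1 ∂μ) = 0 := by
      simp only [pow_one]; exact ih.2.1
    have hZp1 : (∫ ω, auxY d W m ω ^ 1 ∂μ) = 0 := by
      rw [hZval 1 (by norm_num), he1, zero_pow hd1]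
    have hZ2 : (∫ ω, auxY d W m ω ^ 2 ∂μ) = 1 := by
      rw [hZval 2 (by norm_num), he2, one_pow]
    refine ⟨?_, ?_, ?_, ?_⟩
    · intro k hk
      have hrw : (fun ω => auxS d W (m + 1) ω ^ k) = fun ω =>
          ∑ j ∈ Finset.range (k + 1),
            auxS d W m ω ^ j * auxY d W m ω ^ (k - j) * (k.choose j : ℝ) := by
        funext ω; rw [hsucc ω, add_pow]
      rw [hrw]
      apply integrable_finset_sum
      intro j hj
      have hj4 : j ≤ 4 := le_trans (Nat.lt_succ_iff.mp (Finset.mem_range.mp hj)) hk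
      exact ((hcross j (k - j) hj4 (le_trans (Nat.sub_le _ _) hk)).1).mul_const _
    · have hrw : (fun ω => auxS d W (m + 1) ω) = fun ω =>
          auxS d W m ω + auxY d W m ω := funext hsucc
      have hSint1 : Integrable (auxS d W m) μ := by
        simpa using ih.1 1 (by norm_num)
      have hZint1 : Integrable (auxY d W m) μ := by
        simpa using hZint 1 (by norm_num)
      rw [hrw, integral_add hSint1 hZint1, ih.2.1]
      simpa using hZp1
    · have hrw : (fun ω => auxS d W (m + 1) ω ^ 2) = fun ω =>
          auxS d W m ω ^ 2 * auxY d W m ω ^ 0 +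
            (2 * (auxS d W m ω ^ 1 * auxY d W m ω ^ 1) +
              auxS d W m ω ^ 0 * auxY d W m ω ^ 2) := by
        funext ω; rw [hsucc ω]; ring
      have I1 := (hcross 2 0 (by norm_num) (by norm_num)).1
      have I2 := ((hcross 1 1 (by norm_num) (by norm_num)).1).const_mul 2
      have I3 := (hcross 0 2 (by norm_num) (by norm_num)).1
      have I23 : Integrable (fun ω => 2 * (auxS d W m ω ^ 1 * auxY d W m ω ^ 1) +
          auxS d W m ω ^ 0 * auxY d W m ω ^ 2) μ := I2.add I3
      rw [hrw, integral_add I1 I23, integral_add I2 I3, integral_const_mul,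
        (hcross 2 0 (by norm_num) (by norm_num)).2,
        (hcross 1 1 (by norm_num) (by norm_num)).2,
        (hcross 0 2 (by norm_num) (by norm_num)).2,
        hS0, hZ0, hSp1, hZp1, hZ2, ih.2.2.1]
      push_cast; ring
    · have hrw : (fun ω => auxS d W (m + 1) ω ^ 4) = fun ω =>
          auxS d W m ω ^ 4 * auxY d W m ω ^ 0 +
            (4 * (auxS d W m ω ^ 3 * auxY d W m ω ^ 1) +
              (6 * (auxS d W m ω ^ 2 * auxY d W m ω ^ 2) +
                (4 * (auxS d W m ω ^ 1 * auxY d W m ω ^ 3) +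
                  auxS d W m ω ^ 0 * auxY d W m ω ^ 4))) := by
        funext ω; rw [hsucc ω]; ring
      have J1 := (hcross 4 0 (by norm_num) (by norm_num)).1
      have J2 := ((hcross 3 1 (by norm_num) (by norm_num)).1).const_mul 4
      have J3 := ((hcross 2 2 (by norm_num) (by norm_num)).1).const_mul 6
      have J4 := ((hcross 1 3 (by norm_num) (by norm_num)).1).const_mul 4
      have J5 := (hcross 0 4 (by norm_num) (by norm_num)).1
      have J45 : Integrable (fun ω => 4 * (auxS d W m ω ^ 1 * auxY d W m ω ^ 3) +
          auxS d W m ω ^ 0 * auxY d W m ω ^ 4) μ := J4.add J5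
      have J345 : Integrable (fun ω => 6 * (auxS d W m ω ^ 2 * auxY d W m ω ^ 2) +
          (4 * (auxS d W m ω ^ 1 * auxY d W m ω ^ 3) +
            auxS d W m ω ^ 0 * auxY d W m ω ^ 4)) μ := J3.add J45
      have J2345 : Integrable (fun ω => 4 * (auxS d W m ω ^ 3 * auxY d W m ω ^ 1) +
          (6 * (auxS d W m ω ^ 2 * auxY d W m ω ^ 2) +
            (4 * (auxS d W m ω ^ 1 * auxY d W m ω ^ 3) +
              auxS d W m ω ^ 0 * auxY d W m ω ^ 4))) μ := J2.add J345
      rw [hrw, integral_add J1 J2345,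
        integral_add J2 J345, integral_add J3 J45,
        integral_add J4 J5, integral_const_mul, integral_const_mul, integral_const_mul,
        (hcross 4 0 (by norm_num) (by norm_num)).2,
        (hcross 3 1 (by norm_num) (by norm_num)).2,
        (hcross 2 2 (by norm_num) (by norm_num)).2,
        (hcross 1 3 (by norm_num) (by norm_num)).2,
        (hcross 0 4 (by norm_num) (by norm_num)).2,
        hS0, hZ0, hSp1, hZp1, hZ2, ih.2.2.1, ih.2.2.2,
        hZval 4 (by norm_num)]
      push_cast; ring


/-- Remark: explicit homogeneous sums with fourth moment converging to
`3 E[X⁴]`. The family `W` encodes the independent random variables: `W none = X₁` and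
`W (some (i, j)) = X_{j+2}^{(i+1)}` for `i ≥ 0`, `j ∈ {0,…,d-2}`, all distributed as `X`. -/
theorem explicit_sum_fourth_moment
    {Ω : Type*} [MeasurableSpace Ω] (μ : Measure Ω) [IsProbabilityMeasure μ]
    (d : ℕ) (hd : 2 ≤ d)
    (X : Ω → ℝ) (hmeas : Measurable X) (hint : Integrable (fun ω => X ω ^ 4) μ)
    (hm1 : (∫ ω, X ω ∂μ) = 0) (hm2 : (∫ ω, X ω ^ 2 ∂μ) = 1)
    (W : Option (ℕ × Fin (d - 1)) → Ω → ℝ) (hWmeas : ∀ p, Measurable (W p))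
    (hWindep : iIndepFun W μ)
    (hWlaw : ∀ p, μ.map (W p) = μ.map X)
    (Q : ℕ → Ω → ℝ)
    (hQ : ∀ n ω, Q n ω = W none ω *
        (∑ i ∈ Finset.range (n - 1), ∏ j : Fin (d - 1), W (some (i, j)) ω) /
          Real.sqrt ((n : ℝ) - 1)) :
    (∀ n, 2 ≤ n →
        (∫ ω, Q n ω ^ 2 ∂μ) = 1 ∧
        (∫ ω, Q n ω ^ 4 ∂μ) =
          (∫ ω, X ω ^ 4 ∂μ) *
            (3 + ((∫ ω, X ω ^ 4 ∂μ) ^ (d - 1) - 3) / ((n : ℝ) - 1))) ∧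
      Tendsto (fun n => ∫ ω, Q n ω ^ 4 ∂μ) atTop (𝓝 (3 * ∫ ω, X ω ^ 4 ∂μ)) := by
  
  have hd1 : d - 1 ≠ 0 := by omega
  have hXk : ∀ k, k ≤ 4 → Integrable (fun ω => X ω ^ k) μ := fun k hk =>
    aux_int_pow hmeas hint hk
  have hWint : ∀ p, ∀ k, k ≤ 4 → Integrable (fun ω => W p ω ^ k) μ := fun p k hk =>
    (aux_map_pow hmeas (hWmeas p) (hWlaw p) k).2 (hXk k hk)
  have hWval : ∀ p k, (∫ ω, W p ω ^ k ∂μ) = (∫ ω, X ω ^ k ∂μ) := fun p k =>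
    (aux_map_pow hmeas (hWmeas p) (hWlaw p) k).1
  have hS := auxS_moment d hd1 hWmeas hWindep hWint (fun k => ∫ ω, X ω ^ k ∂μ)
    (fun p k => hWval p k) (by simpa using hm1) hm2
  have main : ∀ n, 2 ≤ n →
      (∫ ω, Q n ω ^ 2 ∂μ) = 1 ∧
      (∫ ω, Q n ω ^ 4 ∂μ) =
        (∫ ω, X ω ^ 4 ∂μ) *
          (3 + ((∫ ω, X ω ^ 4 ∂μ) ^ (d - 1) - 3) / ((n : ℝ) - 1)) := by
    intro n hn
    have hnr : (2 : ℝ) ≤ (n : ℝ) := by exact_mod_cast hn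
    have ht0 : (0 : ℝ) ≤ (n : ℝ) - 1 := by linarith
    have htne : ((n : ℝ) - 1) ≠ 0 := by linarith
    have hcast : ((n - 1 : ℕ) : ℝ) = (n : ℝ) - 1 := by
      have h1n : 1 ≤ n := le_trans (by norm_num) hn
      push_cast [Nat.cast_sub h1n]
      ring
    have hQ' : ∀ ω, Q n ω = W none ω * auxS d W (n - 1) ω / Real.sqrt ((n : ℝ) - 1) :=
      fun ω => hQ n ω
    have hindQ : IndepFun (W none) (auxS d W (n - 1)) μ :=
      auxX1S_indep d hWmeas hWindep (n - 1)
    have hS2 : (∫ ω, auxS d W (n - 1) ω ^ 2 ∂μ) = ((n - 1 : ℕ) : ℝ) := (hS (n - 1)).2.2.1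
    have hS4 : (∫ ω, auxS d W (n - 1) ω ^ 4 ∂μ) =
        ((n - 1 : ℕ) : ℝ) * (∫ ω, X ω ^ 4 ∂μ) ^ (d - 1) +
          3 * ((n - 1 : ℕ) : ℝ) * (((n - 1 : ℕ) : ℝ) - 1) := (hS (n - 1)).2.2.2
    constructor
    · have h2 : (fun ω => Q n ω ^ 2) =
          fun ω => W none ω ^ 2 * auxS d W (n - 1) ω ^ 2 / ((n : ℝ) - 1) := by
        funext ω; rw [hQ' ω, div_pow, mul_pow, Real.sq_sqrt ht0]
      have hi2 : IndepFun (fun ω => W none ω ^ 2) (fun ω => auxS d W (n - 1) ω ^ 2) μ :=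
        hindQ.comp (measurable_id.pow_const 2) (measurable_id.pow_const 2)
      have hv2 : (∫ ω, W none ω ^ 2 * auxS d W (n - 1) ω ^ 2 ∂μ) =
          (∫ ω, W none ω ^ 2 ∂μ) * ∫ ω, auxS d W (n - 1) ω ^ 2 ∂μ :=
        hi2.integral_mul_eq_mul_integral (hWint none 2 (by norm_num)).aestronglyMeasurable
          ((hS (n - 1)).1 2 (by norm_num)).aestronglyMeasurable
      rw [h2, integral_div, hv2, hWval none 2, hm2, hS2, hcast, one_mul, div_self htne]
    · have hc4 : Real.sqrt ((n : ℝ) - 1) ^ 4 = ((n : ℝ) - 1) ^ 2 := by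
        rw [show (4 : ℕ) = 2 * 2 from rfl, pow_mul, Real.sq_sqrt ht0]
      have h4 : (fun ω => Q n ω ^ 4) =
          fun ω => W none ω ^ 4 * auxS d W (n - 1) ω ^ 4 / (((n : ℝ) - 1) ^ 2) := by
        funext ω; rw [hQ' ω, div_pow, mul_pow, hc4]
      have hi4 : IndepFun (fun ω => W none ω ^ 4) (fun ω => auxS d W (n - 1) ω ^ 4) μ :=
        hindQ.comp (measurable_id.pow_const 4) (measurable_id.pow_const 4)
      have hv4 : (∫ ω, W none ω ^ 4 * auxS d W (n - 1) ω ^ 4 ∂μ) =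
          (∫ ω, W none ω ^ 4 ∂μ) * ∫ ω, auxS d W (n - 1) ω ^ 4 ∂μ :=
        hi4.integral_mul_eq_mul_integral (hWint none 4 le_rfl).aestronglyMeasurable
          ((hS (n - 1)).1 4 le_rfl).aestronglyMeasurable
      rw [h4, integral_div, hv4, hWval none 4, hS4, hcast]
      field_simp
      ring
  refine ⟨main, ?_⟩
  have hg : Tendsto (fun n : ℕ => ((n : ℝ) - 1)) atTop atTop := by
    simpa [sub_eq_add_neg] using
      tendsto_atTop_add_const_right atTop (-1 : ℝ) tendsto_natCast_atTop_atTop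
  have hlim : Tendsto
      (fun n : ℕ => (∫ ω, X ω ^ 4 ∂μ) *
        (3 + ((∫ ω, X ω ^ 4 ∂μ) ^ (d - 1) - 3) / ((n : ℝ) - 1))) atTop
      (𝓝 ((∫ ω, X ω ^ 4 ∂μ) * (3 + 0))) :=
    tendsto_const_nhds.mul (tendsto_const_nhds.add (Tendsto.div_atTop tendsto_const_nhds hg))
  have heq : (fun n : ℕ => (∫ ω, X ω ^ 4 ∂μ) *
      (3 + ((∫ ω, X ω ^ 4 ∂μ) ^ (d - 1) - 3) / ((n : ℝ) - 1))) =ᶠ[atTop]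
      (fun n => ∫ ω, Q n ω ^ 4 ∂μ) := by
    filter_upwards [eventually_ge_atTop 2] with n hn
    exact ((main n hn).2).symm
  have := Tendsto.congr' heq hlim
  convert this using 2
  ring
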